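/- For every n×n sign matrix A with entries in {±1}, there exist points v_1, ..., v_n on the unit circle S¹ ⊆ R² such that for every row i and every probability distribution μ over columns [n], there exists a vector u ∈ R² with Pr_{j∼μ}[sign⟨u, v_j⟩ ≠ A_{i,j}] ≤ 1/2 − 1/(2n). In other words, the (1/2 − 1/(2n))-approximate sign-rank of every n×n sign matrix is at most 2. -/

import Mathlib

open scoped RealInnerProductSpace
open scoped Classical

noncomputable def Rsign (x : ℝ) : ℝ := if 0 < x then 1 else -1

lemma Rsign_pos {x : ℝ} (h : 0 < x) : Rsign x = 1 := if_pos h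

lemma Rsign_nonpos {x : ℝ} (h : x ≤ 0) : Rsign x = -1 := if_neg (not_lt.mpr h)

lemma Rsign_cases (x : ℝ) : Rsign x = 1 ∨ Rsign x = -1 := by
  unfold Rsign; split <;> simp

lemma Rsign_mul_pos {c x : ℝ} (hc : 0 < c) : Rsign (c * x) = Rsign x := by
  unfold Rsign
  rcases lt_trichotomy x 0 with h | h | h
  · rw [if_neg (by nlinarith), if_neg (by linarith)]
  · simp [h]
  · rw [if_pos (by nlinarith), if_pos h]

/-- Key combinatorial lemma: two classifiers, both correct at a heavy point `j₀`,
disagreeing everywhere else, give that one of them has small error. -/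
lemma key_lemma {n : ℕ} (μ : Fin n → ℝ) (hμ0 : ∀ j, 0 ≤ μ j)
    (hsum : ∑ j, μ j = 1) (j₀ : Fin n) (hj₀ : 1 / (n : ℝ) ≤ μ j₀)
    (a P Q : Fin n → ℝ) (ha : ∀ j, a j = 1 ∨ a j = -1)
    (hP : Rsign (P j₀) = a j₀) (hQ : Rsign (Q j₀) = a j₀)
    (hopp : ∀ j, j ≠ j₀ → Rsign (P j) ≠ Rsign (Q j)) :
    (∑ j ∈ Finset.univ.filter (fun j => Rsign (P j) ≠ a j), μ j
        ≤ 1 / 2 - 1 / (2 * n)) ∨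
    (∑ j ∈ Finset.univ.filter (fun j => Rsign (Q j) ≠ a j), μ j
        ≤ 1 / 2 - 1 / (2 * n)) := by
  have hn : 0 < n := j₀.pos
  set S := Finset.univ.filter (fun j => Rsign (P j) ≠ a j) with hS
  set T := Finset.univ.filter (fun j => Rsign (Q j) ≠ a j) with hT
  have hj₀S : j₀ ∉ S := by simp [hS, hP]
  have hj₀T : j₀ ∉ T := by simp [hT, hQ]
  have hdisj : Disjoint S T := by
    rw [Finset.disjoint_left]
    intro j hjS hjT
    have hjne : j ≠ j₀ := by rintro rfl; exact hj₀S hjS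
    have h1 : Rsign (P j) ≠ a j := (Finset.mem_filter.mp hjS).2
    have h2 : Rsign (Q j) ≠ a j := (Finset.mem_filter.mp hjT).2
    have heq : Rsign (P j) = Rsign (Q j) := by
      rcases Rsign_cases (P j) with h3 | h3 <;> rcases Rsign_cases (Q j) with h4 | h4 <;>
        rcases ha j with h5 | h5 <;> simp_all
    exact hopp j hjne heq
  have hsub : S ∪ T ⊆ Finset.univ.erase j₀ := by
    intro j hj
    rcases Finset.mem_union.mp hj with h | h
    · exact Finset.mem_erase.mpr ⟨fun h' => hj₀S (h' ▸ h), Finset.mem_univ j⟩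
    · exact Finset.mem_erase.mpr ⟨fun h' => hj₀T (h' ▸ h), Finset.mem_univ j⟩
  have hbound : ∑ j ∈ S, μ j + ∑ j ∈ T, μ j ≤ 1 - μ j₀ := by
    rw [← Finset.sum_union hdisj]
    have h1 : ∑ j ∈ S ∪ T, μ j ≤ ∑ j ∈ Finset.univ.erase j₀, μ j :=
      Finset.sum_le_sum_of_subset_of_nonneg hsub (fun j _ _ => hμ0 j)
    have h2 : μ j₀ + ∑ j ∈ Finset.univ.erase j₀, μ j = 1 := by
      rw [Finset.add_sum_erase _ _ (Finset.mem_univ j₀)]; exact hsum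
    linarith
  have hnR : (0 : ℝ) < n := by exact_mod_cast hn
  have hkey : ∑ j ∈ S, μ j + ∑ j ∈ T, μ j ≤ 1 - 1 / n := by linarith
  by_contra hcon
  push_neg at hcon
  obtain ⟨h1, h2⟩ := hcon
  have : 1 / (2 * (n : ℝ)) = (1 / n) / 2 := by ring
  nlinarith [h1, h2]

theorem stmt6 (n : ℕ) (A : Matrix (Fin n) (Fin n) ℝ)
    (hA : ∀ i j, A i j = 1 ∨ A i j = -1) :
    ∃ v : Fin n → EuclideanSpace ℝ (Fin 2),
      (∀ j, ‖v j‖ = 1) ∧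
      ∀ i : Fin n, ∀ μ : Fin n → ℝ, (∀ j, 0 ≤ μ j) → (∑ j, μ j = 1) →
        ∃ u : EuclideanSpace ℝ (Fin 2),
          ∑ j ∈ Finset.univ.filter (fun j => Rsign ⟪u, v j⟫ ≠ A i j), μ j
            ≤ 1 / 2 - 1 / (2 * n) := by
  -- c j is the normalizing constant
  set c : Fin n → ℝ := fun j => (Real.sqrt (1 + (j : ℝ) ^ 2))⁻¹ with hc
  have hsq : ∀ j : Fin n, 0 < Real.sqrt (1 + (j : ℝ) ^ 2) := by
    intro j
    apply Real.sqrt_pos.mpr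
    positivity
  have hcpos : ∀ j, 0 < c j := fun j => inv_pos.mpr (hsq j)
  refine ⟨fun j => (WithLp.equiv 2 (Fin 2 → ℝ)).symm ![c j, c j * j], ?_, ?_⟩
  · intro j
    have : ‖((WithLp.equiv 2 (Fin 2 → ℝ)).symm ![c j, c j * j] : EuclideanSpace ℝ (Fin 2))‖
        = Real.sqrt ((c j) ^ 2 + (c j * j) ^ 2) := by
      simp [EuclideanSpace.norm_eq, Fin.sum_univ_two, sq_abs]
    rw [this]
    have h1 : (c j) ^ 2 + (c j * j) ^ 2 = (c j) ^ 2 * (1 + (j : ℝ) ^ 2) := by ring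
    rw [h1, Real.sqrt_mul (sq_nonneg _), Real.sqrt_sq (le_of_lt (hcpos j))]
    rw [hc]
    field_simp
  · intro i μ hμ0 hsum
    -- find a heavy column
    have hn : 0 < n := i.pos
    have hnR : (0 : ℝ) < n := by exact_mod_cast hn
    obtain ⟨j₀, hj₀⟩ : ∃ j₀ : Fin n, 1 / (n : ℝ) ≤ μ j₀ := by
      by_contra hcon
      push_neg at hcon
      have : ∑ j : Fin n, μ j < ∑ _j : Fin n, 1 / (n : ℝ) :=
        Finset.sum_lt_sum_of_nonempty
          (Finset.univ_nonempty_iff.mpr ⟨i⟩) (fun j _ => hcon j)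
      rw [hsum, Finset.sum_const, Finset.card_univ, Fintype.card_fin] at this
      rw [nsmul_eq_mul] at this
      rw [mul_one_div, div_self (ne_of_gt hnR)] at this
      exact lt_irrefl 1 this
    have hinner : ∀ (a b : ℝ) (j : Fin n),
        ⟪((WithLp.equiv 2 (Fin 2 → ℝ)).symm ![a, b] : EuclideanSpace ℝ (Fin 2)),
          (WithLp.equiv 2 (Fin 2 → ℝ)).symm ![c j, c j * j]⟫
        = c j * (a + b * j) := by
      intro a b j
      simp [PiLp.inner_apply, Fin.sum_univ_two]
      ring
    rcases hA i j₀ with hAij | hAij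
    · -- case A i j₀ = 1 : two "wedge" classifiers
      set u₁ : EuclideanSpace ℝ (Fin 2) :=
        (WithLp.equiv 2 (Fin 2 → ℝ)).symm ![1/2 - (j₀ : ℝ), 1] with hu₁
      set u₂ : EuclideanSpace ℝ (Fin 2) :=
        (WithLp.equiv 2 (Fin 2 → ℝ)).symm ![(j₀ : ℝ) + 1/2, -1] with hu₂
      have hP : ∀ j : Fin n, Rsign ⟪u₁, (WithLp.equiv 2 (Fin 2 → ℝ)).symm ![c j, c j * j]⟫
          = Rsign ((j : ℝ) - j₀ + 1/2) := by
        intro j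
        rw [hu₁, hinner]
        rw [show (1/2 - (j₀ : ℝ) + 1 * j) = ((j : ℝ) - j₀ + 1/2) by ring]
        exact Rsign_mul_pos (hcpos j)
      have hQ : ∀ j : Fin n, Rsign ⟪u₂, (WithLp.equiv 2 (Fin 2 → ℝ)).symm ![c j, c j * j]⟫
          = Rsign ((j₀ : ℝ) - j + 1/2) := by
        intro j
        rw [hu₂, hinner]
        rw [show ((j₀ : ℝ) + 1/2 + (-1) * j) = ((j₀ : ℝ) - j + 1/2) by ring]
        exact Rsign_mul_pos (hcpos j)
      have hkey := key_lemma μ hμ0 hsum j₀ hj₀ (fun j => A i j)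
        (fun j => (j : ℝ) - j₀ + 1/2)
        (fun j => (j₀ : ℝ) - j + 1/2)
        (fun j => hA i j)
        (by beta_reduce; rw [show ((j₀ : ℝ) - j₀ + 1/2) = 1/2 by ring, Rsign_pos (by norm_num), hAij])
        (by beta_reduce; rw [show ((j₀ : ℝ) - j₀ + 1/2) = 1/2 by ring, Rsign_pos (by norm_num), hAij])
        (by
          intro j hj
          beta_reduce
          have hvne : (j : ℕ) ≠ (j₀ : ℕ) := Fin.val_ne_of_ne hj
          have hne : ((j : ℕ) : ℝ) ≠ ((j₀ : ℕ) : ℝ) := by exact_mod_cast hvne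
          rcases lt_or_gt_of_ne hne with h | h
          · have h1 : (j : ℝ) ≤ (j₀ : ℝ) - 1 := by
              have : (j : ℕ) < (j₀ : ℕ) := by exact_mod_cast h
              have : (j : ℕ) + 1 ≤ (j₀ : ℕ) := this
              have : ((j : ℕ) : ℝ) + 1 ≤ ((j₀ : ℕ) : ℝ) := by exact_mod_cast this
              push_cast at this ⊢
              linarith
            rw [Rsign_nonpos (by linarith), Rsign_pos (by linarith)]
            norm_num
          · have h1 : (j₀ : ℝ) ≤ (j : ℝ) - 1 := by
              have : (j₀ : ℕ) < (j : ℕ) := by exact_mod_cast h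
              have : (j₀ : ℕ) + 1 ≤ (j : ℕ) := this
              have : ((j₀ : ℕ) : ℝ) + 1 ≤ ((j : ℕ) : ℝ) := by exact_mod_cast this
              push_cast at this ⊢
              linarith
            rw [Rsign_pos (by linarith), Rsign_nonpos (by linarith)]
            norm_num)
      rcases hkey with h | h
      · exact ⟨u₁, by simp only [hP]; exact h⟩
      · exact ⟨u₂, by simp only [hQ]; exact h⟩
    · -- case A i j₀ = -1 : classifier orthogonal to v j₀ and its negation
      set u₁ : EuclideanSpace ℝ (Fin 2) :=
        (WithLp.equiv 2 (Fin 2 → ℝ)).symm ![(j₀ : ℝ), -1] with hu₁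
      set u₂ : EuclideanSpace ℝ (Fin 2) :=
        (WithLp.equiv 2 (Fin 2 → ℝ)).symm ![-(j₀ : ℝ), 1] with hu₂
      have hP : ∀ j : Fin n, Rsign ⟪u₁, (WithLp.equiv 2 (Fin 2 → ℝ)).symm ![c j, c j * j]⟫
          = Rsign ((j₀ : ℝ) - j) := by
        intro j
        rw [hu₁, hinner]
        rw [show ((j₀ : ℝ) + (-1) * j) = ((j₀ : ℝ) - j) by ring]
        exact Rsign_mul_pos (hcpos j)
      have hQ : ∀ j : Fin n, Rsign ⟪u₂, (WithLp.equiv 2 (Fin 2 → ℝ)).symm ![c j, c j * j]⟫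
          = Rsign ((j : ℝ) - j₀) := by
        intro j
        rw [hu₂, hinner]
        rw [show (-(j₀ : ℝ) + 1 * j) = ((j : ℝ) - j₀) by ring]
        exact Rsign_mul_pos (hcpos j)
      have hkey := key_lemma μ hμ0 hsum j₀ hj₀ (fun j => A i j)
        (fun j => (j₀ : ℝ) - j)
        (fun j => (j : ℝ) - j₀)
        (fun j => hA i j)
        (by beta_reduce; rw [show ((j₀ : ℝ) - j₀) = 0 by ring, Rsign_nonpos (by norm_num), hAij])
        (by beta_reduce; rw [show ((j₀ : ℝ) - j₀) = 0 by ring, Rsign_nonpos (by norm_num), hAij])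
        (by
          intro j hj
          beta_reduce
          have hvne : (j : ℕ) ≠ (j₀ : ℕ) := Fin.val_ne_of_ne hj
          have hne : ((j : ℕ) : ℝ) ≠ ((j₀ : ℕ) : ℝ) := by exact_mod_cast hvne
          rcases lt_or_gt_of_ne hne with h | h
          · rw [Rsign_pos (by linarith), Rsign_nonpos (by linarith)]
            norm_num
          · rw [Rsign_nonpos (by linarith), Rsign_pos (by linarith)]
            norm_num)
      rcases hkey with h | h
      · exact ⟨u₁, by simp only [hP]; exact h⟩
      · exact ⟨u₂, by simp only [hQ]; exact h⟩
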